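/- Fix an integer m ≥ 3 and let C_m = (V, E) be the cycle with vertex set V = {1, 2, …, m} and hyperedges e_i = {i, i+1} for i = 1, …, m−1 together with e_m = {m, 1}. Then the minimum weight of an edge-discriminator on C_m equals ⌈m(m+1)/4⌉; that is, there exists an edge-discriminator of weight ⌈m(m+1)/4⌉, and every edge-discriminator on C_m has weight at least ⌈m(m+1)/4⌉. -/

import Mathlib

/-- `lam` is an edge-discriminator on the hypergraph with hyperedge family `E`
(vertices are natural numbers). -/
def IsEdgeDiscriminator (E : Finset (Finset ℕ)) (lam : ℕ → ℕ) : Prop :=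
  (∀ e ∈ E, 0 < ∑ v ∈ e, lam v) ∧
  (∀ e ∈ E, ∀ f ∈ E, e ≠ f → ∑ v ∈ e, lam v ≠ ∑ v ∈ f, lam v)

/-- The edge set of the cycle on vertices `{1, …, m}`. -/
def cycleEdges (m : ℕ) : Finset (Finset ℕ) :=
  insert ({m, 1} : Finset ℕ)
    ((Finset.Icc 1 (m - 1)).image (fun i => ({i, i + 1} : Finset ℕ)))

/- ### Auxiliary lemmas -/

lemma gauss (n : ℕ) : (∑ i ∈ Finset.Icc 1 n, i) * 2 = n * (n + 1) := by
  induction n with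
  | zero => simp
  | succ n ih =>
    rw [Finset.sum_Icc_succ_top (by omega)]
    nlinarith [ih]

lemma pair_eq_aux {i j : ℕ} (h : ({i, i+1} : Finset ℕ) = {j, j+1}) : i = j := by
  have h1 : i = j ∨ i = j + 1 := by
    have hi : i ∈ ({j, j+1} : Finset ℕ) := by rw [← h]; simp
    simpa using hi
  have h2 : j = i ∨ j = i + 1 := by
    have hj : j ∈ ({i, i+1} : Finset ℕ) := by rw [h]; simp
    simpa using hj
  omega

lemma closing_ne {m i : ℕ} (hm : 3 ≤ m) (hi : 1 ≤ i) (hi2 : i ≤ m - 1) :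
    ({i, i+1} : Finset ℕ) ≠ {m, 1} := by
  intro h
  have h1 : i = m ∨ i = 1 := by
    have hi' : i ∈ ({m, 1} : Finset ℕ) := by rw [← h]; simp
    simpa using hi'
  have h2 : m = i ∨ m = i + 1 := by
    have hm' : m ∈ ({i, i+1} : Finset ℕ) := by rw [h]; simp
    simpa using hm'
  omega

lemma closing_not_mem {m : ℕ} (hm : 3 ≤ m) :
    ({m, 1} : Finset ℕ) ∉ (Finset.Icc 1 (m-1)).image (fun i => ({i, i + 1} : Finset ℕ)) := by
  simp only [Finset.mem_image, Finset.mem_Icc, not_exists]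
  rintro i ⟨⟨hi1, hi2⟩, h⟩
  exact closing_ne hm hi1 hi2 h

lemma mem_cycleEdges {m : ℕ} {e : Finset ℕ} :
    e ∈ cycleEdges m ↔ e = {m, 1} ∨ ∃ i, (1 ≤ i ∧ i ≤ m - 1) ∧ ({i, i+1} : Finset ℕ) = e := by
  simp [cycleEdges, Finset.mem_insert, Finset.mem_image, Finset.mem_Icc]

/-- Telescoping: the sum of all edge sums of the cycle is twice the total weight. -/
lemma sum_cycleEdges {m : ℕ} (hm : 3 ≤ m) (f : ℕ → ℕ) :
    ∑ e ∈ cycleEdges m, ∑ v ∈ e, f v = 2 * ∑ v ∈ Finset.Icc 1 m, f v := by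
  rw [cycleEdges, Finset.sum_insert (closing_not_mem hm),
    Finset.sum_image (fun x hx y hy h => pair_eq_aux h)]
  have e1 : ∀ i ∈ Finset.Icc 1 (m-1), (∑ v ∈ ({i, i+1} : Finset ℕ), f v) = f i + f (i+1) :=
    fun i _ => Finset.sum_pair (by omega)
  rw [Finset.sum_congr rfl e1, Finset.sum_add_distrib,
    Finset.sum_pair (show m ≠ 1 by omega)]
  have himg : (Finset.Icc 1 (m-1)).image (fun i => i + 1) = Finset.Icc 2 m := by
    ext x
    simp only [Finset.mem_image, Finset.mem_Icc]
    constructor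
    · rintro ⟨a, ⟨h1, h2⟩, rfl⟩; omega
    · intro ⟨h1, h2⟩; exact ⟨x - 1, ⟨by omega, by omega⟩, by omega⟩
  have e2 : ∑ i ∈ Finset.Icc 1 (m-1), f (i+1) = ∑ i ∈ Finset.Icc 2 m, f i := by
    rw [← himg, Finset.sum_image (fun x hx y hy h => by omega)]
  have e3 : ∑ v ∈ Finset.Icc 1 m, f v = f m + ∑ v ∈ Finset.Icc 1 (m-1), f v := by
    have : Finset.Icc 1 m = insert m (Finset.Icc 1 (m-1)) := by
      ext x; simp only [Finset.mem_Icc, Finset.mem_insert]; omega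
    rw [this, Finset.sum_insert (by simp only [Finset.mem_Icc]; omega)]
  have e4 : ∑ v ∈ Finset.Icc 1 m, f v = f 1 + ∑ v ∈ Finset.Icc 2 m, f v := by
    have : Finset.Icc 1 m = insert 1 (Finset.Icc 2 m) := by
      ext x; simp only [Finset.mem_Icc, Finset.mem_insert]; omega
    rw [this, Finset.sum_insert (by simp only [Finset.mem_Icc]; omega)]
  rw [e2]
  linarith [e3, e4]

lemma card_cycleEdges {m : ℕ} (hm : 3 ≤ m) : (cycleEdges m).card = m := by
  rw [cycleEdges, Finset.card_insert_of_notMem (closing_not_mem hm),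
    Finset.card_image_of_injOn (fun x hx y hy h => pair_eq_aux h), Nat.card_Icc]
  omega

/-- Any finset of positive naturals of cardinality `n` has sum at least `n(n+1)/2`. -/
lemma sum_distinct_lb (s : Finset ℕ) : 0 ∉ s → s.card * (s.card + 1) ≤ 2 * ∑ x ∈ s, x := by
  induction s using Finset.induction_on_max with
  | empty => simp
  | insert a s ha ih =>
    intro h0
    have ha' : a ∉ s := fun h => lt_irrefl a (ha a h)
    rw [Finset.card_insert_of_notMem ha', Finset.sum_insert ha']
    have h2 := ih (fun h => h0 (Finset.mem_insert_of_mem h))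
    have hsub : s ⊆ Finset.Icc 1 (a - 1) := by
      intro x hx
      simp only [Finset.mem_Icc]
      have hx0 : x ≠ 0 := by rintro rfl; exact h0 (Finset.mem_insert_of_mem hx)
      have := ha x hx
      omega
    have hcard : s.card ≤ a - 1 := by
      have := Finset.card_le_card hsub
      simpa [Nat.card_Icc] using this
    have ha0 : a ≠ 0 := by rintro rfl; exact h0 (Finset.mem_insert_self _ _)
    have hle : s.card + 1 ≤ a := by omega
    nlinarith [h2, hle]

/-- The labeling realizing the optimum. -/
def cyclam (m k : ℕ) : ℕ → ℕ := fun i =>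
  if i ≤ k + 1 then i / 2
  else if (m - i) % 2 = 0 then k + 1 + (m - i) / 2
  else 1 + (m - 1 - i) / 2

/-- The intended edge sums. -/
def cycS (m k : ℕ) (i : ℕ) : ℕ :=
  if i ≤ k then i else if i = k + 1 then k + 1 + (m - 1) / 2 else m + k + 1 - i

lemma cyclam_sum_eq {m k : ℕ} (hm : 3 ≤ m) (hk1 : 1 ≤ k) (hk2 : k + 2 ≤ m)
    (hpar : m % 2 = k % 2) {i : ℕ} (hi1 : 1 ≤ i) (hi2 : i ≤ m - 1) :
    cyclam m k i + cyclam m k (i + 1) = cycS m k i := by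
  simp only [cyclam, cycS]
  split_ifs <;> omega

lemma cyclam_closing {m k : ℕ} (hm : 3 ≤ m) (hk1 : 1 ≤ k) (hk2 : k + 2 ≤ m)
    (hpar : m % 2 = k % 2) :
    cyclam m k m + cyclam m k 1 = k + 1 := by
  simp only [cyclam]
  split_ifs <;> omega

lemma construction {m k : ℕ} (hm : 3 ≤ m) (hk1 : 1 ≤ k) (hk2 : k + 2 ≤ m)
    (hpar : m % 2 = k % 2) (hM : m ≤ k + 1 + (m - 1) / 2) :
    IsEdgeDiscriminator (cycleEdges m) (cyclam m k) ∧
    4 * ∑ v ∈ Finset.Icc 1 m, cyclam m k v = m * (m - 1) + 2 * (k + 1 + (m - 1) / 2) := by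
  have hSpos : ∀ i, 1 ≤ i → i ≤ m - 1 → 0 < cycS m k i := by
    intro i h1 h2
    simp only [cycS]
    split_ifs <;> omega
  have hSne_closing : ∀ i, 1 ≤ i → i ≤ m - 1 → cycS m k i ≠ k + 1 := by
    intro i h1 h2
    simp only [cycS]
    split_ifs <;> omega
  have hSinj : ∀ i j, 1 ≤ i → i ≤ m - 1 → 1 ≤ j → j ≤ m - 1 → i ≠ j →
      cycS m k i ≠ cycS m k j := by
    intro i j hi1 hi2 hj1 hj2 hij
    simp only [cycS]
    split_ifs <;> omega
  refine ⟨⟨?_, ?_⟩, ?_⟩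
  · -- positivity
    intro e he
    rw [mem_cycleEdges] at he
    rcases he with rfl | ⟨i, ⟨hi1, hi2⟩, rfl⟩
    · rw [Finset.sum_pair (show m ≠ 1 by omega), cyclam_closing hm hk1 hk2 hpar]
      omega
    · rw [Finset.sum_pair (show i ≠ i + 1 by omega), cyclam_sum_eq hm hk1 hk2 hpar hi1 hi2]
      exact hSpos i hi1 hi2
  · -- distinctness
    intro e he f hf hef
    rw [mem_cycleEdges] at he hf
    rcases he with rfl | ⟨i, ⟨hi1, hi2⟩, rfl⟩ <;> rcases hf with rfl | ⟨j, ⟨hj1, hj2⟩, rfl⟩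
    · exact absurd rfl hef
    · rw [Finset.sum_pair (show m ≠ 1 by omega), cyclam_closing hm hk1 hk2 hpar,
        Finset.sum_pair (show j ≠ j + 1 by omega), cyclam_sum_eq hm hk1 hk2 hpar hj1 hj2]
      exact fun h => hSne_closing j hj1 hj2 h.symm
    · rw [Finset.sum_pair (show m ≠ 1 by omega), cyclam_closing hm hk1 hk2 hpar,
        Finset.sum_pair (show i ≠ i + 1 by omega), cyclam_sum_eq hm hk1 hk2 hpar hi1 hi2]
      exact hSne_closing i hi1 hi2
    · have hij : i ≠ j := by rintro rfl; exact hef rfl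
      rw [Finset.sum_pair (show i ≠ i + 1 by omega), cyclam_sum_eq hm hk1 hk2 hpar hi1 hi2,
        Finset.sum_pair (show j ≠ j + 1 by omega), cyclam_sum_eq hm hk1 hk2 hpar hj1 hj2]
      exact hSinj i j hi1 hi2 hj1 hj2 hij
  · -- the total weight
    have tele := sum_cycleEdges hm (cyclam m k)
    rw [cycleEdges, Finset.sum_insert (closing_not_mem hm),
      Finset.sum_image (fun x hx y hy h => pair_eq_aux h)] at tele
    rw [Finset.sum_pair (show m ≠ 1 by omega), cyclam_closing hm hk1 hk2 hpar] at tele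
    have e1 : ∀ i ∈ Finset.Icc 1 (m-1),
        (∑ v ∈ ({i, i+1} : Finset ℕ), cyclam m k v) = cycS m k i := by
      intro i hi
      simp only [Finset.mem_Icc] at hi
      rw [Finset.sum_pair (show i ≠ i + 1 by omega)]
      exact cyclam_sum_eq hm hk1 hk2 hpar hi.1 hi.2
    rw [Finset.sum_congr rfl e1] at tele
    -- now evaluate ∑ i ∈ Icc 1 (m-1), cycS m k i
    have split1 : Finset.Icc 1 (m-1) = Finset.Icc 1 k ∪ Finset.Icc (k+1) (m-1) := by
      ext x; simp only [Finset.mem_Icc, Finset.mem_union]; omega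
    have disj1 : Disjoint (Finset.Icc 1 k) (Finset.Icc (k+1) (m-1)) := by
      rw [Finset.disjoint_left]
      intro x hx hy
      simp only [Finset.mem_Icc] at hx hy
      omega
    have split2 : Finset.Icc (k+1) (m-1) = insert (k+1) (Finset.Icc (k+2) (m-1)) := by
      ext x; simp only [Finset.mem_Icc, Finset.mem_insert]; omega
    have nm2 : (k+1) ∉ Finset.Icc (k+2) (m-1) := by simp only [Finset.mem_Icc]; omega
    rw [split1, Finset.sum_union disj1, split2, Finset.sum_insert nm2] at tele
    have s1 : ∑ i ∈ Finset.Icc 1 k, cycS m k i = ∑ i ∈ Finset.Icc 1 k, i := by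
      refine Finset.sum_congr rfl fun i hi => ?_
      simp only [Finset.mem_Icc] at hi
      simp only [cycS]
      split_ifs <;> omega
    have s2 : cycS m k (k+1) = k + 1 + (m - 1) / 2 := by
      simp only [cycS]
      split_ifs <;> omega
    have s3 : ∑ i ∈ Finset.Icc (k+2) (m-1), cycS m k i = ∑ i ∈ Finset.Icc (k+2) (m-1), i := by
      have refl1 : ∑ i ∈ Finset.Icc (k+2) (m-1), cycS m k i
          = ∑ i ∈ Finset.Icc (k+2) (m-1), (m + k + 1 - i) := by
        refine Finset.sum_congr rfl fun i hi => ?_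
        simp only [Finset.mem_Icc] at hi
        simp only [cycS]
        split_ifs <;> omega
      have himg2 : (Finset.Icc (k+2) (m-1)).image (fun i => m + k + 1 - i)
          = Finset.Icc (k+2) (m-1) := by
        ext x
        simp only [Finset.mem_image, Finset.mem_Icc]
        constructor
        · rintro ⟨a, ⟨h1, h2⟩, rfl⟩; omega
        · intro ⟨h1, h2⟩; exact ⟨m + k + 1 - x, ⟨by omega, by omega⟩, by omega⟩
      have refl2 : ∑ i ∈ Finset.Icc (k+2) (m-1), i
          = ∑ i ∈ Finset.Icc (k+2) (m-1), (m + k + 1 - i) := by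
        conv_lhs => rw [← himg2]
        rw [Finset.sum_image (fun x hx y hy h => by
          simp only [Finset.mem_coe, Finset.mem_Icc] at hx hy; omega)]
      rw [refl1, ← refl2]
    rw [s1, s2, s3] at tele
    -- Gauss sums
    have g1 := gauss (m-1)
    have g2 := gauss k
    have split3 : ∑ i ∈ Finset.Icc 1 (m-1), i
        = ∑ i ∈ Finset.Icc 1 k, i + ((k+1) + ∑ i ∈ Finset.Icc (k+2) (m-1), i) := by
      rw [split1, Finset.sum_union disj1, split2, Finset.sum_insert nm2]
    have hmm : (m - 1) * (m - 1 + 1) = m * (m - 1) := by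
      have h : m - 1 + 1 = m := by omega
      rw [h]; ring
    rw [hmm] at g1
    -- abstract nonlinear products
    generalize hA : ∑ i ∈ Finset.Icc 1 (m-1), i = A at g1 split3
    generalize hB : ∑ i ∈ Finset.Icc 1 k, i = B at g2 split3 tele
    generalize hC : ∑ i ∈ Finset.Icc (k+2) (m-1), i = C at split3 tele
    generalize hP : m * (m - 1) = P at g1 ⊢
    generalize hQ : k * (k + 1) = Q at g2
    omega

/-- The minimum weight of an edge-discriminator on the cycle `C_m` is
`⌈m(m+1)/4⌉ = (m(m+1)+3)/4` (natural number division). -/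
theorem cycle_optimum (m : ℕ) (hm : 3 ≤ m) :
    (∃ lam : ℕ → ℕ, IsEdgeDiscriminator (cycleEdges m) lam ∧
      ∑ v ∈ Finset.Icc 1 m, lam v = (m * (m + 1) + 3) / 4) ∧
    (∀ lam : ℕ → ℕ, IsEdgeDiscriminator (cycleEdges m) lam →
      (m * (m + 1) + 3) / 4 ≤ ∑ v ∈ Finset.Icc 1 m, lam v) := by
  constructor
  · -- existence
    set k : ℕ := if m % 4 = 1 ∨ m % 4 = 2 then m / 2 + 1 else m / 2 with hk
    have hkcase : (m % 4 = 1 ∨ m % 4 = 2) ∧ k = m / 2 + 1 ∨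
        (m % 4 = 0 ∨ m % 4 = 3) ∧ k = m / 2 := by
      by_cases h : m % 4 = 1 ∨ m % 4 = 2
      · exact Or.inl ⟨h, by rw [hk, if_pos h]⟩
      · exact Or.inr ⟨by omega, by rw [hk, if_neg h]⟩
    have hk1 : 1 ≤ k := by omega
    have hk2 : k + 2 ≤ m := by omega
    have hpar : m % 2 = k % 2 := by omega
    have hM : m ≤ k + 1 + (m - 1) / 2 := by omega
    obtain ⟨hdisc, hw⟩ := construction hm hk1 hk2 hpar hM
    refine ⟨cyclam m k, hdisc, ?_⟩
    -- weight computation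
    obtain ⟨n, rfl⟩ : ∃ n, m = n + 1 := ⟨m - 1, by omega⟩
    obtain ⟨P, hP⟩ : ∃ P, n * n = P := ⟨_, rfl⟩
    have hP4' : P % 4 = n % 2 := by
      rcases Nat.even_or_odd n with ⟨c, hc⟩ | ⟨c, hc⟩
      · have h1 : n * n = 4 * (c * c) := by subst hc; ring
        obtain ⟨C, hC⟩ : ∃ C, c * c = C := ⟨_, rfl⟩
        rw [hC] at h1
        omega
      · have h1 : n * n = 4 * (c * c) + 4 * c + 1 := by subst hc; ring
        obtain ⟨C, hC⟩ : ∃ C, c * c = C := ⟨_, rfl⟩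
        rw [hC] at h1
        omega
    have e1 : (n + 1) * (n + 1 - 1) = P + n := by
      rw [← hP]
      simp
      ring
    have e2 : (n + 1) * (n + 1 + 1) = P + 3 * n + 2 := by
      rw [← hP]; ring
    rw [e1] at hw
    rw [e2]
    generalize hS : ∑ v ∈ Finset.Icc 1 (n+1), cyclam (n+1) k v = W at hw ⊢
    omega
  · -- lower bound
    intro lam hdisc
    obtain ⟨hpos, hinj⟩ := hdisc
    have hinjOn : ∀ e ∈ cycleEdges m, ∀ f ∈ cycleEdges m,
        (∑ v ∈ e, lam v) = (∑ v ∈ f, lam v) → e = f := by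
      intro e he f hf h
      by_contra hne
      exact hinj e he f hf hne h
    have hcardim : ((cycleEdges m).image (fun e => ∑ v ∈ e, lam v)).card = m := by
      rw [Finset.card_image_of_injOn hinjOn, card_cycleEdges hm]
    have h0 : 0 ∉ (cycleEdges m).image (fun e => ∑ v ∈ e, lam v) := by
      simp only [Finset.mem_image, not_exists]
      rintro e ⟨he, h⟩
      exact absurd (hpos e he) (by omega)
    have hlb := sum_distinct_lb _ h0
    rw [hcardim, Finset.sum_image hinjOn, sum_cycleEdges hm] at hlb
    generalize hP : m * (m + 1) = P at hlb ⊢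
    generalize hS : ∑ v ∈ Finset.Icc 1 m, lam v = W at hlb ⊢
    omega
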